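/- Let A ∈ ℝ^{n×n}, B ∈ ℝ^{n×m}, C ∈ ℝ^{p×n}, D ∈ ℝ^{p×m}, let P ∈ ℝ^{n×n} be symmetric with P ≻ 0, let Q ∈ ℝ^{m×m}, S ∈ ℝ^{m×p}, and let R ∈ ℝ^{p×p} be symmetric with R ⪰ 0. If col(I_n 0; A B; 0 I_m; C D)ᵀ · blockdiag(−P, P, [[Q, S],[Sᵀ, R]]) · col(I_n 0; A B; 0 I_m; C D) ≺ 0, then AᵀПA − P ≺ 0 with П = P (the Lyapunov inequality AᵀPA − P ≺ 0 holds), and consequently every (complex) eigenvalue λ of A satisfies |λ| < 1. -/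

import Mathlib

open Matrix Complex
open scoped ComplexOrder

lemma conjTranspose_map_ofReal' {k l : Type*} (A : Matrix k l ℝ) :
    (A.map (algebraMap ℝ ℂ))ᴴ = Aᵀ.map (algebraMap ℝ ℂ) := by
  ext i j
  simp [conjTranspose_apply, Matrix.map_apply, Complex.conj_ofReal]

lemma posDef_map_ofReal' {k : Type*} [Fintype k] {M : Matrix k k ℝ} (hM : M.PosDef) :
    (M.map (algebraMap ℝ ℂ)).PosDef := by
  have hsymm : Mᵀ = M := hM.1
  refine posDef_iff_dotProduct_mulVec.mpr ⟨?_, ?_⟩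
  · exact hM.1.map _ (fun a => by simp [Complex.conj_ofReal])
  · intro v hv
    set a : k → ℝ := fun i => (v i).re with ha
    set b : k → ℝ := fun i => (v i).im with hb
    have hre : (star v ⬝ᵥ (M.map (algebraMap ℝ ℂ)) *ᵥ v).re
        = a ⬝ᵥ M *ᵥ a + b ⬝ᵥ M *ᵥ b := by
      simp only [dotProduct, mulVec, Matrix.map_apply, Pi.star_apply, Complex.star_def,
        Complex.re_sum, Complex.mul_re, Complex.conj_re, Complex.conj_im,
        Complex.im_sum, Complex.mul_im, Complex.coe_algebraMap,
        Complex.ofReal_re, Complex.ofReal_im,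
        Finset.mul_sum]
      rw [← Finset.sum_add_distrib]
      apply Finset.sum_congr rfl
      intro j _
      rw [← Finset.sum_add_distrib]
      apply Finset.sum_congr rfl
      intro i _
      ring
    have him : (star v ⬝ᵥ (M.map (algebraMap ℝ ℂ)) *ᵥ v).im
        = a ⬝ᵥ M *ᵥ b - b ⬝ᵥ M *ᵥ a := by
      simp only [dotProduct, mulVec, Matrix.map_apply, Pi.star_apply, Complex.star_def,
        Complex.re_sum, Complex.mul_re, Complex.conj_re, Complex.conj_im,
        Complex.im_sum, Complex.mul_im, Complex.coe_algebraMap,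
        Complex.ofReal_re, Complex.ofReal_im,
        Finset.mul_sum]
      rw [← Finset.sum_sub_distrib]
      apply Finset.sum_congr rfl
      intro j _
      rw [← Finset.sum_sub_distrib]
      apply Finset.sum_congr rfl
      intro i _
      ring
    have hsym : a ⬝ᵥ M *ᵥ b = b ⬝ᵥ M *ᵥ a := by
      conv_lhs => rw [← hsymm]
      rw [mulVec_transpose, dotProduct_comm, ← dotProduct_mulVec]
    have hab : a ≠ 0 ∨ b ≠ 0 := by
      by_contra h
      push_neg at h
      apply hv
      funext i
      have h1 := congrFun h.1 i
      have h2 := congrFun h.2 i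
      simp [ha, hb] at h1 h2
      exact Complex.ext h1 h2
    have hpos : 0 < a ⬝ᵥ M *ᵥ a + b ⬝ᵥ M *ᵥ b := by
      rcases hab with h | h
      · exact add_pos_of_pos_of_nonneg (hM.dotProduct_mulVec_pos h) (hM.posSemidef.dotProduct_mulVec_nonneg b)
      · exact add_pos_of_nonneg_of_pos (hM.posSemidef.dotProduct_mulVec_nonneg a) (hM.dotProduct_mulVec_pos h)
    refine Complex.lt_def.mpr ⟨?_, ?_⟩
    · rw [Complex.zero_re, hre]; exact hpos
    · rw [Complex.zero_im, him, hsym, sub_self]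

/-- The stacked matrix `col(I 0; A B; 0 I; C D)`. -/
noncomputable def stackIO {n m p : ℕ}
    (A : Matrix (Fin n) (Fin n) ℝ) (B : Matrix (Fin n) (Fin m) ℝ)
    (C : Matrix (Fin p) (Fin n) ℝ) (D : Matrix (Fin p) (Fin m) ℝ) :
    Matrix ((Fin n ⊕ Fin n) ⊕ (Fin m ⊕ Fin p)) (Fin n ⊕ Fin m) ℝ :=
  fromRows
    (fromRows (fromCols (1 : Matrix (Fin n) (Fin n) ℝ) (0 : Matrix (Fin n) (Fin m) ℝ))
      (fromCols A B))
    (fromRows (fromCols (0 : Matrix (Fin m) (Fin n) ℝ) (1 : Matrix (Fin m) (Fin m) ℝ))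
      (fromCols C D))

/-- The block-diagonal matrix `blockdiag(−P, P, [[Q, S],[Sᵀ, R]])`. -/
noncomputable def dissipWeight {n m p : ℕ}
    (P : Matrix (Fin n) (Fin n) ℝ) (Q : Matrix (Fin m) (Fin m) ℝ)
    (S : Matrix (Fin m) (Fin p) ℝ) (R : Matrix (Fin p) (Fin p) ℝ) :
    Matrix ((Fin n ⊕ Fin n) ⊕ (Fin m ⊕ Fin p)) ((Fin n ⊕ Fin n) ⊕ (Fin m ⊕ Fin p)) ℝ :=
  fromBlocks (fromBlocks (-P) 0 0 P) 0 0 (fromBlocks Q S Sᵀ R)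

/-- If `P ≻ 0`, `R ⪰ 0` and the dissipativity LMI
`col(I 0; A B; 0 I; C D)ᵀ blockdiag(−P,P,[[Q,S],[Sᵀ,R]]) col(…) ≺ 0` holds, then the Lyapunov
inequality `AᵀPA − P ≺ 0` holds and every complex eigenvalue `λ` of `A` satisfies `|λ| < 1`. -/
theorem dissip_LMI_implies_lyapunov_and_schur_stability (n m p : ℕ)
    (A : Matrix (Fin n) (Fin n) ℝ) (B : Matrix (Fin n) (Fin m) ℝ)
    (C : Matrix (Fin p) (Fin n) ℝ) (D : Matrix (Fin p) (Fin m) ℝ)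
    (P : Matrix (Fin n) (Fin n) ℝ) (hP : P.PosDef)
    (Q : Matrix (Fin m) (Fin m) ℝ) (hQ : Q.IsSymm)
    (S : Matrix (Fin m) (Fin p) ℝ)
    (R : Matrix (Fin p) (Fin p) ℝ) (hR : R.PosSemidef)
    (hLMI : (-((stackIO A B C D)ᵀ * dissipWeight P Q S R * stackIO A B C D)).PosDef) :
    (-(Aᵀ * P * A - P)).PosDef ∧
      ∀ lam ∈ spectrum ℂ (A.map (algebraMap ℝ ℂ)), ‖lam‖ < 1 := by
  set M := stackIO A B C D with hM
  set W := dissipWeight P Q S R with hW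
  have part1 : (-(Aᵀ * P * A - P)).PosDef := by
    refine posDef_iff_dotProduct_mulVec.mpr ⟨?_, ?_⟩
    · rw [neg_sub]
      have h1 : (Aᵀ * P * A).IsHermitian := by
        have := (isHermitian_conjTranspose_mul_mul A hP.1)
        simpa using this
      exact hP.1.sub h1
    · intro x hx
      have hy : Sum.elim x (0 : Fin m → ℝ) ≠ 0 := by
        intro h
        apply hx
        funext i
        exact congrFun h (Sum.inl i)
      have hMy : M *ᵥ Sum.elim x 0 = Sum.elim (Sum.elim x (A *ᵥ x)) (Sum.elim 0 (C *ᵥ x)) := by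
        simp [hM, stackIO, fromBlocks_mulVec, Sum.elim_comp_inl, Sum.elim_comp_inr]
      have key : star (Sum.elim x (0 : Fin m → ℝ)) ⬝ᵥ ((Mᵀ * W * M) *ᵥ Sum.elim x 0)
          = (A *ᵥ x) ⬝ᵥ (P *ᵥ (A *ᵥ x)) - x ⬝ᵥ (P *ᵥ x) + (C *ᵥ x) ⬝ᵥ (R *ᵥ (C *ᵥ x)) := by
        rw [star_trivial, ← mulVec_mulVec, ← mulVec_mulVec, dotProduct_mulVec, vecMul_transpose,
          hMy, hW, dissipWeight]
        simp [fromBlocks_mulVec, sumElim_dotProduct_sumElim, neg_mulVec]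
        ring
      have hpos := hLMI.dotProduct_mulVec_pos hy
      rw [neg_mulVec, dotProduct_neg, key] at hpos
      have hRx : 0 ≤ (C *ᵥ x) ⬝ᵥ (R *ᵥ (C *ᵥ x)) := by
        have := hR.dotProduct_mulVec_nonneg (C *ᵥ x); rwa [star_trivial] at this
      have goal_eq : star x ⬝ᵥ ((-(Aᵀ * P * A - P)) *ᵥ x)
          = x ⬝ᵥ (P *ᵥ x) - (A *ᵥ x) ⬝ᵥ (P *ᵥ (A *ᵥ x)) := by
        rw [star_trivial, neg_sub, sub_mulVec, dotProduct_sub, ← mulVec_mulVec, ← mulVec_mulVec]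
        congr 1
        rw [dotProduct_mulVec, vecMul_transpose]
      rw [goal_eq]
      linarith
  refine ⟨part1, ?_⟩
  have hLyap : (P - Aᵀ * P * A).PosDef := by rwa [neg_sub] at part1
  have hPc := posDef_map_ofReal' hP
  have hLc := posDef_map_ofReal' hLyap
  intro lam hlam
  set Ac := A.map (algebraMap ℝ ℂ) with hAc
  set Pc := P.map (algebraMap ℝ ℂ) with hPcdef
  rw [spectrum.mem_iff] at hlam
  have hdet : (lam • (1 : Matrix (Fin n) (Fin n) ℂ) - Ac).det = 0 := by
    by_contra h
    exact hlam (by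
      rw [Algebra.algebraMap_eq_smul_one]
      exact (Matrix.isUnit_iff_isUnit_det _).mpr (isUnit_iff_ne_zero.mpr h))
  obtain ⟨v, hv, hveq⟩ := (Matrix.exists_mulVec_eq_zero_iff).mpr hdet
  have hAv : Ac *ᵥ v = lam • v := by
    rw [sub_mulVec, smul_mulVec, one_mulVec, sub_eq_zero] at hveq
    exact hveq.symm
  have hmap : (P - Aᵀ * P * A).map (algebraMap ℝ ℂ)
      = Pc - Aᵀ.map (algebraMap ℝ ℂ) * Pc * Ac := by
    ext i j
    simp [hAc, hPcdef, Matrix.map_apply, Matrix.sub_apply, Matrix.mul_apply, Finset.mul_sum]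
  have h2 := hLc.dotProduct_mulVec_pos hv
  rw [hmap, sub_mulVec, dotProduct_sub] at h2
  have hsplit : star v ⬝ᵥ ((Aᵀ.map (algebraMap ℝ ℂ) * Pc * Ac) *ᵥ v)
      = star (Ac *ᵥ v) ⬝ᵥ (Pc *ᵥ (Ac *ᵥ v)) := by
    rw [← conjTranspose_map_ofReal', ← mulVec_mulVec, ← mulVec_mulVec, dotProduct_mulVec,
      ← star_mulVec]
  have heig : star (Ac *ᵥ v) ⬝ᵥ (Pc *ᵥ (Ac *ᵥ v))
      = (Complex.normSq lam : ℂ) * (star v ⬝ᵥ (Pc *ᵥ v)) := by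
    rw [hAv, mulVec_smul, star_smul, smul_dotProduct, dotProduct_smul, smul_smul, smul_eq_mul]
    congr 1
    rw [Complex.star_def, ← Complex.normSq_eq_conj_mul_self]
  rw [hsplit, heig] at h2
  have hc : 0 < (star v ⬝ᵥ (Pc *ᵥ v)).re := by
    have := (Complex.lt_def.mp (hPc.dotProduct_mulVec_pos hv)).1
    simpa using this
  have h2re : 0 < (star v ⬝ᵥ (Pc *ᵥ v)).re
      - Complex.normSq lam * (star v ⬝ᵥ (Pc *ᵥ v)).re := by
    have := (Complex.lt_def.mp h2).1
    simpa [Complex.sub_re, Complex.re_ofReal_mul] using this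
  have hns : Complex.normSq lam < 1 := by nlinarith
  nlinarith [norm_nonneg lam, Complex.sq_norm lam]
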